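/- Let 𝔸 be a complex Banach algebra with unit, let k : ℕ, and let a : Fin k → 𝔸 with sum H = ∑_i a i. For ε ∈ ℝ, let P(ε) = (exp(ε • a 0) * exp(ε • a 1) * ⋯ * exp(ε • a (k−1))) * (exp(ε • a (k−1)) * ⋯ * exp(ε • a 1) * exp(ε • a 0)) be the symmetrized ordered product (forward product times reversed product). Then there exist constants K > 0 and δ > 0 such that for all 0 < ε < δ, ‖P(ε) − exp((2ε) • H)‖ ≤ K·ε³. (Symmetric Trotter formula: the palindromic product of exponentials approximates e^{2εH} with third-order error, used to simulate the truncated nonlinearity Hamiltonian as a sequence of elementary gates.) -/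

import Mathlib

open Nat NormedSpace in
lemma exp_taylor2 {𝔸 : Type*} [NormedRing 𝔸] [NormedAlgebra ℂ 𝔸] [CompleteSpace 𝔸] (x : 𝔸) :
    ‖exp x - (1 + x + (2:ℝ)⁻¹ • (x*x))‖ ≤ ‖x‖^3 * Real.exp ‖x‖ := by
  have hs : Summable (fun n : ℕ => ((n ! : ℂ))⁻¹ • x ^ n) := expSeries_summable' x
  have h3 := hs.sum_add_tsum_nat_add 3
  have hpart : ∑ i ∈ Finset.range 3, ((i ! : ℂ))⁻¹ • x ^ i = 1 + x + (2:ℝ)⁻¹ • (x*x) := by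
    rw [Finset.sum_range_succ, Finset.sum_range_succ, Finset.sum_range_one]
    have : ((2:ℝ))⁻¹ • (x*x) = ((2:ℂ))⁻¹ • (x*x) := by
      rw [← algebraMap_smul ℂ ((2:ℝ))⁻¹ (x*x), map_inv₀, map_ofNat]
    simp [this, pow_two]

  have hdiff : exp x - (1 + x + (2:ℝ)⁻¹ • (x*x)) = ∑' i, ((((i+3)! : ℂ)))⁻¹ • x ^ (i+3) := by
    rw [exp_eq_tsum (𝕂 := ℂ)]; dsimp only; rw [← h3, hpart]
    abel
  rw [hdiff]
  have hnorm : ∀ i : ℕ, ‖(((i+3)! : ℂ))⁻¹ • x ^ (i+3)‖ ≤ ‖x‖^3 * (‖x‖^i / i !) := by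
    intro i
    rw [norm_smul, norm_inv]
    have h1 : ‖((i+3)! : ℂ)‖ = ((i+3)! : ℝ) := by
      simp [Complex.norm_natCast]
    rw [h1]
    have h2 : ‖x ^ (i+3)‖ ≤ ‖x‖ ^ (i+3) := norm_pow_le' x (by omega)
    have h3 : (((i+3)! : ℝ))⁻¹ ≤ ((i ! : ℝ))⁻¹ := by
      apply inv_anti₀
      · positivity
      · exact_mod_cast Nat.factorial_le (by omega)
    calc (((i+3)! : ℝ))⁻¹ * ‖x ^ (i+3)‖ ≤ ((i ! : ℝ))⁻¹ * ‖x‖ ^ (i+3) := by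
          apply mul_le_mul h3 h2 (norm_nonneg _) (by positivity)
      _ = ‖x‖^3 * (‖x‖^i / i !) := by rw [pow_add]; ring
  have hsumm : Summable (fun i => ‖(((i+3)! : ℂ))⁻¹ • x ^ (i+3)‖) := by
    have := (norm_expSeries_summable' (𝕂 := ℂ) x)
    exact (summable_nat_add_iff 3).mpr this
  have hsumm2 : Summable (fun i : ℕ => ‖x‖^3 * (‖x‖^i / i !)) :=
    (Real.summable_pow_div_factorial ‖x‖).mul_left _
  calc ‖∑' i, (((i+3)! : ℂ))⁻¹ • x ^ (i+3)‖ ≤ ∑' i, ‖(((i+3)! : ℂ))⁻¹ • x ^ (i+3)‖ :=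
        norm_tsum_le_tsum_norm hsumm
    _ ≤ ∑' i : ℕ, ‖x‖^3 * (‖x‖^i / i !) := Summable.tsum_le_tsum hnorm hsumm hsumm2
    _ = ‖x‖^3 * Real.exp ‖x‖ := by
        rw [tsum_mul_left, Real.exp_eq_exp_ℝ, exp_eq_tsum_div]

noncomputable def T2 {𝔸 : Type*} [NormedRing 𝔸] [NormedAlgebra ℂ 𝔸] : List 𝔸 → 𝔸
  | [] => 0
  | b :: L => (2:ℝ)⁻¹ • (b * b) + b * L.sum + T2 L

open Nat NormedSpace in
lemma prod_exp_approx {𝔸 : Type*} [NormedRing 𝔸] [NormedAlgebra ℂ 𝔸] [CompleteSpace 𝔸]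
    (L : List 𝔸) :
    ∃ C : ℝ, 0 ≤ C ∧ ∀ ε : ℝ, 0 < ε → ε ≤ 1 →
      ‖(L.map fun b => exp (ε • b)).prod - (1 + ε • L.sum + (ε^2) • T2 L)‖ ≤ C * ε^3 := by
  induction L with
  | nil =>
      refine ⟨0, le_refl _, fun ε hε hε1 => ?_⟩
      simp [T2]
  | cons b L ih =>
      obtain ⟨C, hC0, hC⟩ := ih
      set c : 𝔸 := (2:ℝ)⁻¹ • (b * b) with hc_def
      set Cb : ℝ := ‖b‖^3 * Real.exp ‖b‖ with hCb_def
      set NB : ℝ := C + ‖(1:𝔸)‖ + ‖L.sum‖ + ‖T2 L‖ with hNB_def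
      set NA : ℝ := ‖(1:𝔸)‖ + ‖b‖ + ‖c‖ with hNA_def
      refine ⟨Cb * NB + NA * C + (‖b * T2 L + c * L.sum‖ + ‖c * T2 L‖), by positivity,
        fun ε hε hε1 => ?_⟩
      set A : 𝔸 := exp (ε • b) with hA_def
      set A₀ : 𝔸 := 1 + ε • b + (ε^2) • c with hA0_def
      set B : 𝔸 := (L.map fun b => exp (ε • b)).prod with hB_def
      set B₀ : 𝔸 := 1 + ε • L.sum + (ε^2) • T2 L with hB0_def
      have hεpow : ∀ n : ℕ, ε ^ n ≤ 1 := fun n => pow_le_one₀ hε.le hε1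
      -- step 1
      have hstep1 : ‖A - A₀‖ ≤ Cb * ε^3 := by
        have h := exp_taylor2 (ε • b)
        have hcc : (2:ℝ)⁻¹ • ((ε • b) * (ε • b)) = (ε^2) • c := by
          rw [smul_mul_smul_comm, hc_def, smul_smul, smul_smul]
          congr 1; ring
        rw [hcc] at h
        have hn : ‖ε • b‖ = ε * ‖b‖ := by
          rw [norm_smul, Real.norm_eq_abs, abs_of_pos hε]
        rw [hn] at h
        refine h.trans ?_
        have h1 : (ε * ‖b‖)^3 = ε^3 * ‖b‖^3 := by ring
        have h2 : Real.exp (ε * ‖b‖) ≤ Real.exp ‖b‖ := by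
          apply Real.exp_le_exp.mpr
          exact mul_le_of_le_one_left (norm_nonneg b) hε1
        calc (ε * ‖b‖)^3 * Real.exp (ε * ‖b‖) ≤ (ε * ‖b‖)^3 * Real.exp ‖b‖ := by
              apply mul_le_mul_of_nonneg_left h2 (by positivity)
          _ = Cb * ε^3 := by rw [h1, hCb_def]; ring
      -- step 2
      have hstep2 : ‖B - B₀‖ ≤ C * ε^3 := hC ε hε hε1
      -- step 3
      have hstep3 : ‖B‖ ≤ NB := by
        calc ‖B‖ ≤ ‖B - B₀‖ + ‖B₀‖ := by
              have := norm_add_le (B - B₀) B₀; simpa using this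
          _ ≤ C * ε^3 + (‖(1:𝔸)‖ + ε * ‖L.sum‖ + ε^2 * ‖T2 L‖) := by
              apply add_le_add hstep2
              calc ‖B₀‖ ≤ ‖(1:𝔸)‖ + ‖ε • L.sum‖ + ‖(ε^2) • T2 L‖ :=
                    norm_add₃_le
                _ = ‖(1:𝔸)‖ + ε * ‖L.sum‖ + ε^2 * ‖T2 L‖ := by
                    rw [norm_smul, norm_smul, Real.norm_eq_abs, Real.norm_eq_abs,
                      abs_of_pos hε, abs_of_pos (pow_pos hε 2)]
          _ ≤ NB := by
              rw [hNB_def]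
              have h1 : C * ε^3 ≤ C := by
                nlinarith [hεpow 3]
              have h2 : ε * ‖L.sum‖ ≤ ‖L.sum‖ := mul_le_of_le_one_left (norm_nonneg _) hε1
              have h3 : ε^2 * ‖T2 L‖ ≤ ‖T2 L‖ := mul_le_of_le_one_left (norm_nonneg _) (hεpow 2)
              linarith
      -- step 4
      have hstep4 : ‖A₀‖ ≤ NA := by
        calc ‖A₀‖ ≤ ‖(1:𝔸)‖ + ‖ε • b‖ + ‖(ε^2) • c‖ := norm_add₃_le
          _ ≤ ‖(1:𝔸)‖ + ‖b‖ + ‖c‖ := by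
              rw [norm_smul, norm_smul, Real.norm_eq_abs, Real.norm_eq_abs,
                abs_of_pos hε, abs_of_pos (pow_pos hε 2)]
              have h2 : ε * ‖b‖ ≤ ‖b‖ := mul_le_of_le_one_left (norm_nonneg _) hε1
              have h3 : ε^2 * ‖c‖ ≤ ‖c‖ := mul_le_of_le_one_left (norm_nonneg _) (hεpow 2)
              linarith
      -- step 5: algebraic identity
      have hT2cons : T2 (b :: L) = c + b * L.sum + T2 L := rfl
      have hid : A₀ * B₀ = 1 + ε • (b + L.sum) + (ε^2) • T2 (b :: L)
          + (ε^3) • (b * T2 L + c * L.sum) + (ε^4) • (c * T2 L) := by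
        rw [hA0_def, hB0_def, hT2cons]
        simp only [mul_add, add_mul, one_mul, mul_one, smul_mul_smul_comm, smul_mul_assoc,
          mul_smul_comm, smul_smul, smul_add]
        module
      -- assemble
      have hprod : ((b :: L).map fun b => exp (ε • b)).prod = A * B := by
        simp [hA_def, hB_def]
      rw [hprod]
      have hsum : (b :: L).sum = b + L.sum := List.sum_cons
      rw [hsum]
      have hdecomp : A * B - (1 + ε • (b + L.sum) + (ε^2) • T2 (b :: L))
          = (A - A₀) * B + A₀ * (B - B₀)
            + ((ε^3) • (b * T2 L + c * L.sum) + (ε^4) • (c * T2 L)) := by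
        rw [sub_mul, mul_sub, hid]; abel
      rw [hdecomp]
      have hlast : ‖(ε^3) • (b * T2 L + c * L.sum) + (ε^4) • (c * T2 L)‖
          ≤ (‖b * T2 L + c * L.sum‖ + ‖c * T2 L‖) * ε^3 := by
        calc ‖(ε^3) • (b * T2 L + c * L.sum) + (ε^4) • (c * T2 L)‖
            ≤ ‖(ε^3) • (b * T2 L + c * L.sum)‖ + ‖(ε^4) • (c * T2 L)‖ := norm_add_le _ _
          _ = ε^3 * ‖b * T2 L + c * L.sum‖ + ε^4 * ‖c * T2 L‖ := by
              rw [norm_smul, norm_smul, Real.norm_eq_abs, Real.norm_eq_abs,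
                abs_of_pos (pow_pos hε 3), abs_of_pos (pow_pos hε 4)]
          _ ≤ (‖b * T2 L + c * L.sum‖ + ‖c * T2 L‖) * ε^3 := by
              have h4 : ε^4 ≤ ε^3 := pow_le_pow_of_le_one hε.le hε1 (by omega)
              have := norm_nonneg (c * T2 L)
              nlinarith [norm_nonneg (b * T2 L + c * L.sum), pow_pos hε 3]
      calc ‖(A - A₀) * B + A₀ * (B - B₀)
            + ((ε^3) • (b * T2 L + c * L.sum) + (ε^4) • (c * T2 L))‖
          ≤ ‖(A - A₀) * B‖ + ‖A₀ * (B - B₀)‖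
            + ‖(ε^3) • (b * T2 L + c * L.sum) + (ε^4) • (c * T2 L)‖ := norm_add₃_le
        _ ≤ ‖A - A₀‖ * ‖B‖ + ‖A₀‖ * ‖B - B₀‖
            + (‖b * T2 L + c * L.sum‖ + ‖c * T2 L‖) * ε^3 := by
            exact _root_.add_le_add (_root_.add_le_add (norm_mul_le _ _) (norm_mul_le _ _)) hlast
        _ ≤ (Cb * ε^3) * NB + NA * (C * ε^3)
            + (‖b * T2 L + c * L.sum‖ + ‖c * T2 L‖) * ε^3 := by
            apply add_le_add_left
            apply _root_.add_le_add
            · apply mul_le_mul hstep1 hstep3 (norm_nonneg _) (by positivity)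
            · apply mul_le_mul hstep4 hstep2 (norm_nonneg _) (by positivity)
              -- NA ≥ 0
        _ = (Cb * NB + NA * C + (‖b * T2 L + c * L.sum‖ + ‖c * T2 L‖)) * ε^3 := by ring

lemma T2_append {𝔸 : Type*} [NormedRing 𝔸] [NormedAlgebra ℂ 𝔸] (L₁ L₂ : List 𝔸) :
    T2 (L₁ ++ L₂) = T2 L₁ + L₁.sum * L₂.sum + T2 L₂ := by
  induction L₁ with
  | nil => simp [T2]
  | cons b L ih =>
      simp only [List.cons_append, T2, ih, List.sum_cons, List.sum_append, List.append_eq, add_mul, mul_add]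
      abel

lemma T2_reverse_add {𝔸 : Type*} [NormedRing 𝔸] [NormedAlgebra ℂ 𝔸] (L : List 𝔸) :
    T2 L + T2 L.reverse = L.sum * L.sum := by
  induction L with
  | nil => simp [T2]
  | cons b L ih =>
      have h1 : (b :: L).reverse = L.reverse ++ [b] := by simp
      rw [h1, T2_append]
      have hhalf : (2:ℝ)⁻¹ • (b * b) + (2:ℝ)⁻¹ • (b * b) = b * b := by
        rw [← add_smul]; norm_num
      simp only [T2, List.sum_cons, List.sum_reverse, List.sum_nil, mul_zero, add_zero]
      have : T2 L + T2 L.reverse = L.sum * L.sum := ih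
      calc (2:ℝ)⁻¹ • (b * b) + b * L.sum + T2 L +
            (T2 L.reverse + L.sum * b + (2:ℝ)⁻¹ • (b * b))
          = ((2:ℝ)⁻¹ • (b * b) + (2:ℝ)⁻¹ • (b * b)) + b * L.sum + L.sum * b +
            (T2 L + T2 L.reverse) := by abel
        _ = (b + L.sum) * (b + L.sum) := by rw [hhalf, this, add_mul, mul_add, mul_add]; abel

/-- Symmetric (palindromic) Trotter formula: the forward-times-reversed product of
exponentials approximates `exp (2ε • H)` with third-order error. -/
theorem stmt_18 {𝔸 : Type*} [NormedRing 𝔸] [NormedAlgebra ℂ 𝔸] [CompleteSpace 𝔸]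
    (k : ℕ) (a : Fin k → 𝔸) (H : 𝔸) (hH : H = ∑ i, a i)
    (P : ℝ → 𝔸)
    (hP : ∀ ε : ℝ, P ε =
      (List.ofFn fun i : Fin k => NormedSpace.exp (ε • a i)).prod *
      (List.ofFn fun i : Fin k => NormedSpace.exp (ε • a i)).reverse.prod) :
    ∃ K > (0 : ℝ), ∃ δ > (0 : ℝ), ∀ ε : ℝ, 0 < ε → ε < δ →
      ‖P ε - NormedSpace.exp ((2 * ε) • H)‖ ≤ K * ε ^ 3 := by
  set L₀ : List 𝔸 := List.ofFn a with hL0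
  set L : List 𝔸 := L₀ ++ L₀.reverse with hL
  obtain ⟨C, hC0, hC⟩ := prod_exp_approx L
  refine ⟨C + 8 * ‖H‖^3 * Real.exp (2*‖H‖) + 1, by positivity, 1, one_pos,
    fun ε hε hε1 => ?_⟩
  have hε1' : ε ≤ 1 := hε1.le
  -- rewrite P ε as the product over the palindromic list
  have hmapfn : (List.ofFn fun i : Fin k => NormedSpace.exp (ε • a i))
      = L₀.map (fun b => NormedSpace.exp (ε • b)) := by
    rw [hL0, List.map_ofFn]
    rfl
  have hPε : P ε = (L.map fun b => NormedSpace.exp (ε • b)).prod := by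
    rw [hP, hmapfn, hL, List.map_append, List.prod_append, List.map_reverse]
  -- sums and T2
  have hS0 : L₀.sum = H := by rw [hL0, List.sum_ofFn, hH]
  have hS : L.sum = H + H := by rw [hL, List.sum_append, List.sum_reverse, hS0]
  have hT : T2 L = H * H + (H * H) := by
    rw [hL, T2_append, List.sum_reverse, hS0]
    have h2 := T2_reverse_add L₀
    rw [hS0] at h2
    linear_combination (norm := abel) h2
  -- the common midpoint
  set M : 𝔸 := 1 + ε • L.sum + (ε^2) • T2 L with hM
  have h1 : ‖P ε - M‖ ≤ C * ε^3 := by rw [hPε]; exact hC ε hε hε1'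
  -- exp side
  have h2 : ‖NormedSpace.exp ((2*ε) • H) - M‖ ≤ (8 * ‖H‖^3 * Real.exp (2*‖H‖)) * ε^3 := by
    have h := exp_taylor2 ((2*ε) • H)
    have hmid1 : (2*ε) • H = ε • L.sum := by
      rw [hS, two_mul, add_smul, smul_add]
    have hmid2 : (2:ℝ)⁻¹ • (((2*ε) • H) * ((2*ε) • H)) = (ε^2) • T2 L := by
      rw [smul_mul_smul_comm, smul_smul, hT, ← two_smul ℝ (H * H), smul_smul]
      congr 1; ring
    rw [hmid2] at h
    have hM' : M = 1 + (2*ε) • H + (ε^2) • T2 L := by rw [hM, hmid1]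
    rw [hM']
    refine h.trans ?_
    have hn : ‖(2*ε) • H‖ = 2 * ε * ‖H‖ := by
      rw [norm_smul, Real.norm_eq_abs, abs_of_pos (by linarith)]
    rw [hn]
    have hexp : Real.exp (2 * ε * ‖H‖) ≤ Real.exp (2 * ‖H‖) := by
      apply Real.exp_le_exp.mpr
      nlinarith [norm_nonneg H]
    calc (2 * ε * ‖H‖)^3 * Real.exp (2 * ε * ‖H‖)
        ≤ (2 * ε * ‖H‖)^3 * Real.exp (2 * ‖H‖) := by
          apply mul_le_mul_of_nonneg_left hexp (by positivity)
      _ = (8 * ‖H‖^3 * Real.exp (2*‖H‖)) * ε^3 := by ring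
  calc ‖P ε - NormedSpace.exp ((2*ε) • H)‖
      ≤ ‖P ε - M‖ + ‖NormedSpace.exp ((2*ε) • H) - M‖ := by
        have := norm_add_le (P ε - M) (M - NormedSpace.exp ((2*ε) • H))
        rw [← norm_neg (NormedSpace.exp ((2*ε) • H) - M)]
        simpa [neg_sub] using this
    _ ≤ C * ε^3 + (8 * ‖H‖^3 * Real.exp (2*‖H‖)) * ε^3 := add_le_add h1 h2
    _ ≤ (C + 8 * ‖H‖^3 * Real.exp (2*‖H‖) + 1) * ε^3 := by nlinarith [pow_pos hε 3]
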